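/- arXiv:1406.3387 — 4 statements merged into one kernel-verified Lean document; each statement's English description precedes it below -/
import Mathlib

section
/- Generalized Cheeger inequality (easy direction): for the generalized Laplacian L = (T D_W)^{-1/2}(D_W - W)(D_W T)^{-1/2} with τ_i ≥ 1, the second smallest eigenvalue λ₂ satisfies λ₂ ≤ 2 φ_L(G), where φ_L(G) = min over nonempty proper subsets S of cut_W(S, S̄) / min(vol_L(S), vol_L(S̄)). -/
open Matrix

/-- generalized Cheeger inequality, easy direction: `λ₂ ≤ 2 φ_L(G)`,
where `λ₂` is the second smallest eigenvalue of `L` (characterized via the Rayleigh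
quotient over vectors orthogonal to the kernel eigenvector `v₁ i = sqrt(d_i τ_i)`),
and `φ_L(G)` is the minimal generalized conductance over nonempty proper subsets. -/
theorem generalized_cheeger_easy
    {n : ℕ} (hn : 1 < n) (W : Matrix (Fin n) (Fin n) ℝ) (hWsymm : W.IsSymm)
    (hWnn : ∀ i j, 0 ≤ W i j) (d τ : Fin n → ℝ)
    (hd : ∀ i, d i = ∑ j, W i j) (hdpos : ∀ i, 0 < d i) (hτ : ∀ i, 1 ≤ τ i)
    (L : Matrix (Fin n) (Fin n) ℝ)
    (hL : L = Matrix.diagonal (fun i => (Real.sqrt (d i * τ i))⁻¹) *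
        (Matrix.diagonal d - W) *
        Matrix.diagonal (fun i => (Real.sqrt (d i * τ i))⁻¹))
    (lam2 : ℝ)
    (hlam2 : IsGLB {r : ℝ | ∃ u : Fin n → ℝ, u ≠ 0 ∧
        (u ⬝ᵥ fun i => Real.sqrt (d i * τ i)) = 0 ∧
        r = (u ⬝ᵥ (L *ᵥ u)) / (u ⬝ᵥ u)} lam2)
    (φ : ℝ)
    (hφ : IsGLB {r : ℝ | ∃ S : Finset (Fin n), S.Nonempty ∧ S ≠ Finset.univ ∧
        r = (∑ i ∈ S, ∑ j ∈ Sᶜ, W i j) /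
          min (∑ i ∈ S, d i * τ i) (∑ i ∈ Sᶜ, d i * τ i)} φ) :
    lam2 ≤ 2 * φ := by
  have hdτ : ∀ i, 0 < d i * τ i := fun i =>
    mul_pos (hdpos i) (lt_of_lt_of_le one_pos (hτ i))
  set s : Fin n → ℝ := fun i => Real.sqrt (d i * τ i) with hs_def
  have hspos : ∀ i, 0 < s i := fun i => Real.sqrt_pos.mpr (hdτ i)
  have hsne : ∀ i, s i ≠ 0 := fun i => (hspos i).ne'
  have hssq : ∀ i, s i * s i = d i * τ i := fun i => Real.mul_self_sqrt (hdτ i).le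
  have key : ∀ r ∈ {r : ℝ | ∃ S : Finset (Fin n), S.Nonempty ∧ S ≠ Finset.univ ∧
        r = (∑ i ∈ S, ∑ j ∈ Sᶜ, W i j) /
          min (∑ i ∈ S, d i * τ i) (∑ i ∈ Sᶜ, d i * τ i)}, lam2 ≤ 2 * r := by
    rintro r ⟨S, hSne, hSuniv, rfl⟩
    have hScne : Sᶜ.Nonempty := Finset.nonempty_iff_ne_empty.mpr
      fun h => hSuniv ((Finset.compl_eq_empty_iff S).mp h)
    set volS := ∑ i ∈ S, d i * τ i with hvolS_def
    set volC := ∑ i ∈ Sᶜ, d i * τ i with hvolC_def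
    have hvolS : 0 < volS := Finset.sum_pos (fun i _ => hdτ i) hSne
    have hvolC : 0 < volC := Finset.sum_pos (fun i _ => hdτ i) hScne
    set α := volS⁻¹ with hα_def
    set β := volC⁻¹ with hβ_def
    have hαpos : 0 < α := inv_pos.mpr hvolS
    have hβpos : 0 < β := inv_pos.mpr hvolC
    set y : Fin n → ℝ := fun i => if i ∈ S then α else -β with hy_def
    set u : Fin n → ℝ := fun i => s i * y i with hu_def
    set C := ∑ i ∈ S, ∑ j ∈ Sᶜ, W i j with hC_def
    have hCnn : 0 ≤ C :=
      Finset.sum_nonneg fun i _ => Finset.sum_nonneg fun j _ => hWnn i j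
    -- u ≠ 0
    obtain ⟨i0, hi0⟩ := hSne
    have hune : u ≠ 0 := by
      intro h
      have h0 : u i0 = 0 := congrFun h i0
      have : s i0 * α = 0 := by simpa [hu_def, hy_def, hi0] using h0
      exact absurd this (mul_ne_zero (hsne i0) hαpos.ne')
    -- orthogonality
    have horth : (u ⬝ᵥ fun i => Real.sqrt (d i * τ i)) = 0 := by
      have : (u ⬝ᵥ fun i => Real.sqrt (d i * τ i)) = ∑ i, d i * τ i * y i := by
        simp only [dotProduct, hu_def]
        refine Finset.sum_congr rfl fun i _ => ?_
        show s i * y i * s i = d i * τ i * y i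
        rw [← hssq i]; ring
      rw [this, ← Finset.sum_add_sum_compl S]
      have h1 : ∑ i ∈ S, d i * τ i * y i = volS * α := by
        rw [hvolS_def, Finset.sum_mul]
        exact Finset.sum_congr rfl fun i hi => by simp [hy_def, hi]
      have h2 : ∑ i ∈ Sᶜ, d i * τ i * y i = volC * (-β) := by
        rw [hvolC_def, Finset.sum_mul]
        refine Finset.sum_congr rfl fun i hi => by
          simp [hy_def, (Finset.mem_compl.mp hi)]
      rw [h1, h2, hα_def, hβ_def]
      field_simp
      ring
    -- denominator
    have hden : (u ⬝ᵥ u) = α + β := by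
      have : (u ⬝ᵥ u) = ∑ i, d i * τ i * (y i * y i) := by
        simp only [dotProduct, hu_def]
        refine Finset.sum_congr rfl fun i _ => ?_
        show s i * y i * (s i * y i) = d i * τ i * (y i * y i)
        rw [← hssq i]; ring
      rw [this, ← Finset.sum_add_sum_compl S]
      have h1 : ∑ i ∈ S, d i * τ i * (y i * y i) = volS * (α * α) := by
        rw [hvolS_def, Finset.sum_mul]
        exact Finset.sum_congr rfl fun i hi => by simp [hy_def, hi]
      have h2 : ∑ i ∈ Sᶜ, d i * τ i * (y i * y i) = volC * (β * β) := by
        refine Eq.trans ?_ (Finset.sum_mul ..).symm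
        refine Finset.sum_congr rfl fun i hi => by
          simp [hy_def, (Finset.mem_compl.mp hi)]
      rw [h1, h2, hα_def, hβ_def]
      field_simp
    -- L entries
    have hLij : ∀ i j, L i j = (s i)⁻¹ * (((if i = j then d i else 0) - W i j) * (s j)⁻¹) := by
      intro i j
      simp [hL, Matrix.mul_diagonal, Matrix.diagonal_mul, Matrix.sub_apply,
        Matrix.diagonal_apply, hs_def, mul_assoc]
    -- numerator
    have hC' : (∑ i ∈ Sᶜ, ∑ j ∈ S, W i j) = C := by
      rw [show (∑ i ∈ Sᶜ, ∑ j ∈ S, W i j) = ∑ j ∈ S, ∑ i ∈ Sᶜ, W i j from Finset.sum_comm, hC_def]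
      exact Finset.sum_congr rfl fun j _ => Finset.sum_congr rfl fun i _ =>
        (hWsymm.apply i j).symm
    have hnum : (u ⬝ᵥ (L *ᵥ u)) = (α + β) * ((α + β) * C) := by
      have e1 : (u ⬝ᵥ (L *ᵥ u)) =
          ∑ i, ∑ j, y i * (((if i = j then d i else 0) - W i j) * y j) := by
        simp only [dotProduct, Matrix.mulVec, Finset.mul_sum]
        refine Finset.sum_congr rfl fun i _ => Finset.sum_congr rfl fun j _ => ?_
        rw [hLij i j, hu_def]
        simp only
        field_simp [hsne i, hsne j]
      have e2 : ∑ i, ∑ j, y i * (((if i = j then d i else 0) - W i j) * y j)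
          = ∑ i, ∑ j, W i j * (y i * (y i - y j)) := by
        have ed : ∀ i : Fin n, d i * (y i * y i) = ∑ j, W i j * (y i * y i) := by
          intro i; rw [hd i, Finset.sum_mul]
        refine Finset.sum_congr rfl fun i _ => ?_
        have : ∑ j, y i * (((if i = j then d i else 0) - W i j) * y j)
            = (∑ j : Fin n, (if i = j then d i * (y i * y i) else 0))
              - ∑ j, W i j * (y i * y j) := by
          rw [← Finset.sum_sub_distrib]
          refine Finset.sum_congr rfl fun j _ => ?_
          by_cases h : i = j <;> simp [h] <;> ring
        rw [this, Finset.sum_ite_eq Finset.univ i (fun _ => d i * (y i * y i))]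
        simp only [Finset.mem_univ, if_true]
        rw [ed i, ← Finset.sum_sub_distrib]
        refine Finset.sum_congr rfl fun j _ => by ring
      rw [e1, e2]
      have split : ∀ f : Fin n → ℝ, (∑ i, f i) = (∑ i ∈ S, f i) + ∑ i ∈ Sᶜ, f i :=
        fun f => (Finset.sum_add_sum_compl S f).symm
      rw [split]
      have hS1 : ∑ i ∈ S, ∑ j, W i j * (y i * (y i - y j))
          = ∑ i ∈ S, ∑ j ∈ Sᶜ, W i j * (α * (α + β)) := by
        refine Finset.sum_congr rfl fun i hi => ?_
        rw [split (fun j => W i j * (y i * (y i - y j)))]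
        have z1 : ∑ j ∈ S, W i j * (y i * (y i - y j)) = 0 := by
          refine Finset.sum_eq_zero fun j hj => by simp [hy_def, hi, hj]
        have z2 : ∑ j ∈ Sᶜ, W i j * (y i * (y i - y j))
            = ∑ j ∈ Sᶜ, W i j * (α * (α + β)) := by
          refine Finset.sum_congr rfl fun j hj => ?_
          have hj' := Finset.mem_compl.mp hj
          simp only [hy_def, hi, hj', if_true, if_neg hj']
          ring
        rw [z1, z2, zero_add]
      have hS2 : ∑ i ∈ Sᶜ, ∑ j, W i j * (y i * (y i - y j))
          = ∑ i ∈ Sᶜ, ∑ j ∈ S, W i j * (β * (α + β)) := by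
        refine Finset.sum_congr rfl fun i hi => ?_
        have hi' := Finset.mem_compl.mp hi
        rw [split (fun j => W i j * (y i * (y i - y j)))]
        have z2 : ∑ j ∈ Sᶜ, W i j * (y i * (y i - y j)) = 0 := by
          refine Finset.sum_eq_zero fun j hj => by
            simp [hy_def, hi', (Finset.mem_compl.mp hj)]
        have z1 : ∑ j ∈ S, W i j * (y i * (y i - y j))
            = ∑ j ∈ S, W i j * (β * (α + β)) := by
          refine Finset.sum_congr rfl fun j hj => ?_
          simp only [hy_def, if_neg hi', hj, if_true]
          ring
        rw [z1, z2, add_zero]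
      rw [hS1, hS2]
      have t1 : ∑ i ∈ S, ∑ j ∈ Sᶜ, W i j * (α * (α + β)) = C * (α * (α + β)) := by
        rw [hC_def, Finset.sum_mul]
        exact Finset.sum_congr rfl fun i _ => (Finset.sum_mul ..).symm
      have t2 : ∑ i ∈ Sᶜ, ∑ j ∈ S, W i j * (β * (α + β)) = C * (β * (α + β)) := by
        rw [← hC', Finset.sum_mul]
        exact Finset.sum_congr rfl fun i _ => (Finset.sum_mul ..).symm
      rw [t1, t2]; ring
    -- lam2 ≤ Rayleigh quotient
    have hmem : ((u ⬝ᵥ (L *ᵥ u)) / (u ⬝ᵥ u)) ∈ {r : ℝ | ∃ u : Fin n → ℝ, u ≠ 0 ∧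
        (u ⬝ᵥ fun i => Real.sqrt (d i * τ i)) = 0 ∧
        r = (u ⬝ᵥ (L *ᵥ u)) / (u ⬝ᵥ u)} := ⟨u, hune, horth, rfl⟩
    have hray : lam2 ≤ (α + β) * C := by
      have := hlam2.1 hmem
      rwa [hnum, hden, mul_div_assoc, mul_div_cancel_left₀ _ (by positivity)] at this
    -- (α+β) * C ≤ 2 * (C / min volS volC)
    have hmin : 0 < min volS volC := lt_min hvolS hvolC
    have hαle : α ≤ (min volS volC)⁻¹ :=
      inv_anti₀ hmin (min_le_left _ _)
    have hβle : β ≤ (min volS volC)⁻¹ :=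
      inv_anti₀ hmin (min_le_right _ _)
    have : (α + β) * C ≤ 2 * (C / min volS volC) := by
      have h1 : C * (α + β) ≤ C * (2 * (min volS volC)⁻¹) :=
        mul_le_mul_of_nonneg_left (by linarith) hCnn
      calc (α + β) * C = C * (α + β) := by ring
        _ ≤ C * (2 * (min volS volC)⁻¹) := h1
        _ = 2 * (C / min volS volC) := by rw [div_eq_mul_inv]; ring
    linarith
  have h2 : lam2 / 2 ≤ φ := hφ.2 fun r hr => by linarith [key r hr]
  linarith
end

section
/- Generalized Cheeger inequality (hard direction): for the generalized Laplacian L = (T D_W)^{-1/2}(D_W - W)(D_W T)^{-1/2} with τ_i ≥ 1 for all i, the second smallest eigenvalue λ₂ satisfies φ_L(G)²/2 ≤ λ₂, where φ_L(G) is the generalized conductance of the graph. -/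
open Matrix


lemma exists_median {n : ℕ} (hn : 0 < n) (f μ : Fin n → ℝ) (hμ : ∀ i, 0 ≤ μ i) :
    ∃ c : ℝ, 2 * (∑ i ∈ Finset.univ.filter (fun i => f i < c), μ i) ≤ (∑ i, μ i) ∧
             2 * (∑ i ∈ Finset.univ.filter (fun i => c < f i), μ i) ≤ (∑ i, μ i) := by
  set M := ∑ i, μ i with hM
  have hM0 : 0 ≤ M := Finset.sum_nonneg fun i _ => hμ i
  have hVne : (Finset.univ.image f).Nonempty := by
    refine Finset.Nonempty.image ⟨⟨0, hn⟩, Finset.mem_univ _⟩ f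
  set V := Finset.univ.image f with hV
  set C := V.filter (fun v => 2 * (∑ i ∈ Finset.univ.filter (fun i => f i < v), μ i) ≤ M) with hC
  have hCne : C.Nonempty := by
    refine ⟨V.min' hVne, Finset.mem_filter.2 ⟨V.min'_mem hVne, ?_⟩⟩
    have : (Finset.univ.filter (fun i => f i < V.min' hVne)) = ∅ := by
      refine Finset.filter_false_of_mem fun i _ => not_lt.2 ?_
      exact V.min'_le (f i) (Finset.mem_image_of_mem f (Finset.mem_univ i))
    rw [this]
    simpa using hM0
  refine ⟨C.max' hCne, (Finset.mem_filter.1 (C.max'_mem hCne)).2, ?_⟩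
  set c := C.max' hCne with hc
  by_contra hcon
  push_neg at hcon
  -- the set {i | c < f i} is nonempty
  have hne2 : ∃ i, c < f i := by
    by_contra h2
    push_neg at h2
    have : (Finset.univ.filter (fun i => c < f i)) = ∅ :=
      Finset.filter_false_of_mem fun i _ => not_lt.2 (h2 i)
    rw [this] at hcon
    simp at hcon
    linarith
  obtain ⟨i0, hi0⟩ := hne2
  set V' := V.filter (fun v => c < v) with hV'
  have hV'ne : V'.Nonempty :=
    ⟨f i0, Finset.mem_filter.2 ⟨Finset.mem_image_of_mem f (Finset.mem_univ i0), hi0⟩⟩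
  set c' := V'.min' hV'ne with hc'
  have hcc' : c < c' := (Finset.mem_filter.1 (V'.min'_mem hV'ne)).2
  -- {f < c'} ⊆ {¬ (c < f)}
  have hsub : (Finset.univ.filter (fun i => f i < c')) ⊆
      (Finset.univ.filter (fun i => ¬ c < f i)) := by
    intro i hi
    rw [Finset.mem_filter] at hi ⊢
    refine ⟨hi.1, fun hlt => ?_⟩
    have : c' ≤ f i := V'.min'_le (f i)
      (Finset.mem_filter.2 ⟨Finset.mem_image_of_mem f (Finset.mem_univ i), hlt⟩)
    linarith [hi.2]
  have hcompl : (∑ i ∈ Finset.univ.filter (fun i => ¬ c < f i), μ i)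
      = M - (∑ i ∈ Finset.univ.filter (fun i => c < f i), μ i) := by
    rw [hM, eq_sub_iff_add_eq]
    rw [Finset.sum_filter_not_add_sum_filter]
  have h1 : (∑ i ∈ Finset.univ.filter (fun i => f i < c'), μ i) ≤
      M - (∑ i ∈ Finset.univ.filter (fun i => c < f i), μ i) := by
    rw [← hcompl]
    exact Finset.sum_le_sum_of_subset_of_nonneg hsub (fun i _ _ => hμ i)
  have hc'C : c' ∈ C := by
    refine Finset.mem_filter.2 ⟨(Finset.mem_filter.1 (V'.min'_mem hV'ne)).1, ?_⟩
    linarith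
  have := C.le_max' c' hc'C
  linarith


lemma split_sq (a b : ℝ) :
    (max a 0 - max b 0)^2 + (max (-a) 0 - max (-b) 0)^2 ≤ (a - b)^2 := by
  have hpa : 0 ≤ max a 0 := le_max_right _ _
  have hqa : 0 ≤ max (-a) 0 := le_max_right _ _
  have hpb : 0 ≤ max b 0 := le_max_right _ _
  have hqb : 0 ≤ max (-b) 0 := le_max_right _ _
  have ha : max a 0 - max (-a) 0 = a := by
    rcases le_total a 0 with h | h
    · rw [max_eq_right h, max_eq_left (neg_nonneg.2 h)]; ring
    · rw [max_eq_left h, max_eq_right (neg_nonpos.2 h)]; ring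
  have hb : max b 0 - max (-b) 0 = b := by
    rcases le_total b 0 with h | h
    · rw [max_eq_right h, max_eq_left (neg_nonneg.2 h)]; ring
    · rw [max_eq_left h, max_eq_right (neg_nonpos.2 h)]; ring
  have hma : max a 0 * max (-a) 0 = 0 := by
    rcases le_total a 0 with h | h
    · rw [max_eq_right h]; ring
    · rw [max_eq_right (neg_nonpos.2 h)]; ring
  have hmb : max b 0 * max (-b) 0 = 0 := by
    rcases le_total b 0 with h | h
    · rw [max_eq_right h]; ring
    · rw [max_eq_right (neg_nonpos.2 h)]; ring
  nlinarith [mul_nonneg hpa hqb, mul_nonneg hqa hpb]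

lemma split_sq_sum (a : ℝ) : (max a 0)^2 + (max (-a) 0)^2 = a^2 := by
  rcases le_total a 0 with h | h
  · rw [max_eq_right h, max_eq_left (neg_nonneg.2 h)]; ring
  · rw [max_eq_left h, max_eq_right (neg_nonpos.2 h)]; ring

lemma quad_helper {n : ℕ} (W : Matrix (Fin n) (Fin n) ℝ)
    (hWs : ∀ i j, W i j = W j i) (f : Fin n → ℝ) :
    ∑ i, ∑ j, W i j * (f i - f j)^2 =
      2 * ((∑ i, (∑ j, W i j) * f i ^ 2) - ∑ i, ∑ j, W i j * (f i * f j)) := by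
  have e1 : ∀ i : Fin n, ∑ j, W i j * (f i - f j)^2
      = (∑ j, W i j) * f i ^2 + (∑ j, W i j * f j ^2) - 2 * ∑ j, W i j * (f i * f j) := by
    intro i
    rw [Finset.sum_mul, Finset.mul_sum, ← Finset.sum_add_distrib, ← Finset.sum_sub_distrib]
    exact Finset.sum_congr rfl fun j _ => by ring
  rw [Finset.sum_congr rfl fun i _ => e1 i]
  have e2 : (∑ i : Fin n, ∑ j : Fin n, W i j * f j ^2)
      = ∑ i : Fin n, (∑ j : Fin n, W i j) * f i ^2 := by
    rw [Finset.sum_comm]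
    refine Finset.sum_congr rfl fun j _ => ?_
    rw [Finset.sum_mul]
    exact Finset.sum_congr rfl fun i _ => by rw [hWs i j]
  rw [Finset.sum_sub_distrib, Finset.sum_add_distrib, e2]
  rw [show (∑ i : Fin n, 2 * ∑ j : Fin n, W i j * (f i * f j))
      = 2 * ∑ i : Fin n, ∑ j : Fin n, W i j * (f i * f j) from (Finset.mul_sum _ _ _).symm]
  ring


lemma quad_form_calc {n : ℕ} (W : Matrix (Fin n) (Fin n) ℝ) (d a u : Fin n → ℝ) :
    (u ⬝ᵥ ((Matrix.diagonal a * (Matrix.diagonal d - W) * Matrix.diagonal a) *ᵥ u))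
    = ∑ i, (a i * u i) * (d i * (a i * u i) - ∑ j, W i j * (a j * u j)) := by
  set z : Fin n → ℝ := fun j => a j * u j with hz
  have h1 : Matrix.diagonal a *ᵥ u = z := by
    funext j; simp [Matrix.mulVec_diagonal, hz]
  have h2 : (Matrix.diagonal d - W) *ᵥ z = fun i => d i * z i - ∑ j, W i j * z j := by
    funext i
    simp only [Matrix.mulVec, dotProduct, Matrix.sub_apply]
    rw [show (∑ x : Fin n, (Matrix.diagonal d i x - W i x) * z x)
        = (∑ x : Fin n, Matrix.diagonal d i x * z x) - ∑ x : Fin n, W i x * z x by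
      rw [← Finset.sum_sub_distrib]; exact Finset.sum_congr rfl fun x _ => by ring]
    congr 1
    simp [Matrix.diagonal_apply, Finset.sum_ite_eq, mul_comm]
  rw [← Matrix.mulVec_mulVec, ← Matrix.mulVec_mulVec, h1, h2]
  simp only [dotProduct, Matrix.mulVec_diagonal]
  exact Finset.sum_congr rfl fun i _ => by ring


set_option maxHeartbeats 2000000 in
lemma cheeger_sweep {n : ℕ} (W : Matrix (Fin n) (Fin n) ℝ)
    (hWs : ∀ i j, W i j = W j i) (hWnn : ∀ i j, 0 ≤ W i j)
    (μ h : Fin n → ℝ) (hμ : ∀ i, 0 < μ i) (hdμ : ∀ i, (∑ j, W i j) ≤ μ i)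
    (hh : ∀ i, 0 ≤ h i) (hne : ∃ i, h i ≠ 0) :
    ∃ S : Finset (Fin n), S.Nonempty ∧ (∀ i ∈ S, h i ≠ 0) ∧
      (∑ i ∈ S, ∑ j ∈ Sᶜ, W i j) ≤
        Real.sqrt ((∑ i, ∑ j, W i j * (h i - h j)^2) / (∑ i, μ i * h i ^ 2)) *
          (∑ i ∈ S, μ i) := by
  classical
  obtain ⟨i₀, hi₀⟩ := hne
  have hn : 0 < n := Fin.pos_iff_nonempty.2 ⟨i₀⟩
  set x : Fin n → ℝ := fun i => h i ^ 2 with hx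
  set A : ℝ := ∑ i, ∑ j, W i j * (h i - h j)^2 with hA
  set D : ℝ := ∑ i, μ i * h i ^ 2 with hD
  have hA0 : 0 ≤ A :=
    Finset.sum_nonneg fun i _ => Finset.sum_nonneg fun j _ =>
      mul_nonneg (hWnn i j) (sq_nonneg _)
  have hD0 : 0 < D := by
    refine Finset.sum_pos' (fun i _ => mul_nonneg (hμ i).le (sq_nonneg _)) ?_
    exact ⟨i₀, Finset.mem_univ _, mul_pos (hμ i₀) (by positivity)⟩
  set c : ℝ := Real.sqrt (A / D) with hc
  by_contra hcon
  push_neg at hcon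
  have hcon' : ∀ S : Finset (Fin n), S.Nonempty → (∀ i ∈ S, h i ≠ 0) →
      c * (∑ i ∈ S, μ i) < ∑ i ∈ S, ∑ j ∈ Sᶜ, W i j := by
    intro S h1 h2
    have := hcon S h1 h2
    linarith [this]
  -- sorting machinery
  set σ := Tuple.sort x with hσ
  set r : Fin n → ℕ := fun i => (σ.symm i : ℕ) with hr
  have hrn : ∀ i, r i < n := fun i => (σ.symm i).2
  set T : ℕ → ℝ := fun k => if hk : k < n then x (σ ⟨k, hk⟩) else 0 with hT
  set F : ℕ → ℝ := fun k => if k = 0 then 0 else T (k-1) with hF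
  set δ : ℕ → ℝ := fun k => F (k+1) - F k with hδ
  have hFs : ∀ k, F (k+1) = T k := fun k => by simp [hF]
  have hxT : ∀ i, x i = T (r i) := by
    intro i
    have h1 : (⟨r i, hrn i⟩ : Fin n) = σ.symm i := by
      apply Fin.ext; rfl
    simp only [hT, dif_pos (hrn i), h1, Equiv.apply_symm_apply]
  have hTmono : ∀ k l : ℕ, k ≤ l → l < n → T k ≤ T l := by
    intro k l hkl hl
    have hk : k < n := lt_of_le_of_lt hkl hl
    have := Tuple.monotone_sort x (a := ⟨k, hk⟩) (b := ⟨l, hl⟩) hkl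
    simpa [hT, dif_pos hk, dif_pos hl] using this
  have hT0 : ∀ k, 0 ≤ T k := by
    intro k
    by_cases hk : k < n
    · simp only [hT, dif_pos hk, hx]; positivity
    · simp [hT, dif_neg hk]
  have hδ0 : ∀ k, k < n → 0 ≤ δ k := by
    intro k hk
    cases k with
    | zero => simpa [hδ, hFs, hF] using hT0 0
    | succ m =>
        have h1 : T m ≤ T (m+1) := hTmono m (m+1) (by omega) hk
        simp only [hδ, hFs]
        linarith
  -- sweep sets
  set S : ℕ → Finset (Fin n) := fun k => Finset.univ.filter (fun i => k ≤ r i) with hS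
  have hSne : ∀ k, k < n → (S k).Nonempty := by
    intro k hk
    refine ⟨σ ⟨n-1, by omega⟩, Finset.mem_filter.2 ⟨Finset.mem_univ _, ?_⟩⟩
    have h1 : σ.symm (σ ⟨n-1, by omega⟩) = ⟨n-1, by omega⟩ := Equiv.symm_apply_apply _ _
    simp only [hr, h1]
    omega
  -- layer-cake for single values
  have hlayer1 : ∀ i, x i = ∑ k ∈ Finset.range n, (if k ≤ r i then δ k else 0) := by
    intro i
    have hfilt : (Finset.range n).filter (fun k => k ≤ r i) = Finset.range (r i + 1) := by
      ext k
      simp only [Finset.mem_filter, Finset.mem_range]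
      have := hrn i
      constructor
      · rintro ⟨_, h2⟩; omega
      · intro hk; omega
    rw [← Finset.sum_filter, hfilt]
    have h1 : ∑ k ∈ Finset.range (r i + 1), δ k = F (r i + 1) - F 0 := Finset.sum_range_sub F _
    rw [h1, hFs, ← hxT]
    simp [hF]
  -- layer-cake for pairs
  have hlayer2 : ∀ i j, (∑ k ∈ Finset.range n, (if k ≤ r i ∧ ¬ k ≤ r j then δ k else 0))
      = max (x i - x j) 0 := by
    intro i j
    have hfilt2 : (Finset.range n).filter (fun k => k ≤ r i ∧ ¬ k ≤ r j)
        = Finset.Ico (r j + 1) (r i + 1) := by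
      ext k
      simp only [Finset.mem_filter, Finset.mem_range, Finset.mem_Ico]
      have := hrn i
      constructor
      · rintro ⟨_, h2, h3⟩; omega
      · intro hk; omega
    rw [← Finset.sum_filter, hfilt2]
    by_cases hij : r j < r i
    · rw [Finset.sum_Ico_eq_sub _ (by omega)]
      rw [Finset.sum_range_sub F, Finset.sum_range_sub F, hFs, hFs, ← hxT, ← hxT]
      have h2 : x j ≤ x i := by rw [hxT, hxT]; exact hTmono _ _ (by omega) (hrn i)
      rw [max_eq_left (by linarith)]
      ring
    · have he : Finset.Ico (r j + 1) (r i + 1) = ∅ := by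
        apply Finset.Ico_eq_empty; omega
      rw [he, Finset.sum_empty]
      have h2 : x i ≤ x j := by rw [hxT, hxT]; exact hTmono _ _ (by omega) (hrn j)
      rw [max_eq_right (by linarith)]
  -- D as weighted sum over sweep sets
  have hDid : D = ∑ k ∈ Finset.range n, δ k * (∑ i ∈ S k, μ i) := by
    have h1 : D = ∑ i, μ i * ∑ k ∈ Finset.range n, (if k ≤ r i then δ k else 0) := by
      rw [hD]
      exact Finset.sum_congr rfl fun i _ => by rw [← hlayer1 i]
    rw [h1]
    simp_rw [Finset.mul_sum]
    rw [Finset.sum_comm]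
    refine Finset.sum_congr rfl fun k _ => ?_
    rw [hS]
    simp only
    rw [Finset.sum_filter]
    refine Finset.sum_congr rfl fun i _ => ?_
    by_cases hki : k ≤ r i <;> simp [hki, mul_comm]
  -- K as weighted sum over sweep sets
  set K : ℝ := ∑ i, ∑ j, W i j * max (x i - x j) 0 with hK
  have hKid : K = ∑ k ∈ Finset.range n, δ k * (∑ i ∈ S k, ∑ j ∈ (S k)ᶜ, W i j) := by
    have step1 : K = ∑ i, ∑ j, ∑ k ∈ Finset.range n,
        (if k ≤ r i ∧ ¬ k ≤ r j then W i j * δ k else 0) := by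
      refine Finset.sum_congr rfl fun i _ => Finset.sum_congr rfl fun j _ => ?_
      rw [← hlayer2 i j, Finset.mul_sum]
      exact Finset.sum_congr rfl fun k _ => by
        by_cases hk : k ≤ r i ∧ ¬ k ≤ r j <;> simp [hk]
    have step2 : K = ∑ k ∈ Finset.range n, ∑ i, ∑ j,
        (if k ≤ r i ∧ ¬ k ≤ r j then W i j * δ k else 0) := by
      rw [step1]
      rw [show (∑ i, ∑ j, ∑ k ∈ Finset.range n,
        (if k ≤ r i ∧ ¬ k ≤ r j then W i j * δ k else 0)) =
        ∑ i, ∑ k ∈ Finset.range n, ∑ j,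
        (if k ≤ r i ∧ ¬ k ≤ r j then W i j * δ k else 0) from
        Finset.sum_congr rfl fun i _ => Finset.sum_comm]
      exact Finset.sum_comm
    rw [step2]
    refine Finset.sum_congr rfl fun k _ => ?_
    have hcompl : (S k)ᶜ = Finset.univ.filter (fun j => ¬ k ≤ r j) := by
      rw [hS]; ext j; simp
    rw [Finset.mul_sum, hS]
    simp only
    rw [Finset.sum_filter]
    refine Finset.sum_congr rfl fun i _ => ?_
    by_cases hp : k ≤ r i
    · simp only [if_pos hp, Finset.mul_sum, hcompl, Finset.compl_filter, Finset.sum_filter]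
      refine Finset.sum_congr rfl fun j _ => ?_
      by_cases hq : k ≤ r j <;> simp [hp, hq] <;> ring
    · simp only [if_neg hp]
      refine Finset.sum_eq_zero fun j _ => ?_
      simp [hp]
  -- existence of a positive increment
  have hex : ∃ k₀ ∈ Finset.range n, 0 < δ k₀ ∧
      c * (∑ i ∈ S k₀, μ i) < ∑ i ∈ S k₀, ∑ j ∈ (S k₀)ᶜ, W i j := by
    have hexδ : ∃ k₀ ∈ Finset.range n, 0 < δ k₀ := by
      by_contra hno
      push_neg at hno
      have hall : ∀ k ∈ Finset.range n, δ k = 0 := fun k hk =>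
        le_antisymm (hno k hk) (hδ0 k (Finset.mem_range.1 hk))
      have hx0 : x i₀ = 0 := by
        rw [hlayer1 i₀]
        exact Finset.sum_eq_zero fun k hk => by
          by_cases h' : k ≤ r i₀ <;> simp [h', hall k hk]
      exact hi₀ (by rwa [hx, pow_eq_zero_iff (two_ne_zero)] at hx0)
    obtain ⟨k₀, hk₀, hk₀pos⟩ := hexδ
    refine ⟨k₀, hk₀, hk₀pos, ?_⟩
    have hkn : k₀ < n := Finset.mem_range.1 hk₀
    refine hcon' (S k₀) (hSne k₀ hkn) ?_
    intro i hi
    have hki : k₀ ≤ r i := (Finset.mem_filter.1 hi).2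
    have hTk : 0 < T k₀ := by
      cases k₀ with
      | zero => simpa [hδ, hFs, hF] using hk₀pos
      | succ m =>
          have h1 : δ (m+1) = T (m+1) - T m := by simp [hδ, hFs, hF]
          have := hT0 m
          rw [h1] at hk₀pos
          linarith
    have h2 : T k₀ ≤ x i := by rw [hxT]; exact hTmono _ _ hki (hrn i)
    intro h0
    rw [hx] at h2
    simp only [h0] at h2
    norm_num at h2
    linarith
  -- per-term bound
  have hterm : ∀ k ∈ Finset.range n,
      δ k * (c * (∑ i ∈ S k, μ i)) ≤ δ k * (∑ i ∈ S k, ∑ j ∈ (S k)ᶜ, W i j) := by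
    intro k hk
    have hkn : k < n := Finset.mem_range.1 hk
    rcases eq_or_lt_of_le (hδ0 k hkn) with heq | hpos
    · rw [← heq]; simp
    · refine mul_le_mul_of_nonneg_left ?_ hpos.le
      refine (hcon' (S k) (hSne k hkn) ?_).le
      intro i hi
      have hki : k ≤ r i := (Finset.mem_filter.1 hi).2
      have hTk : 0 < T k := by
        cases k with
        | zero => simpa [hδ, hFs, hF] using hpos
        | succ m =>
            have h1 : δ (m+1) = T (m+1) - T m := by simp [hδ, hFs, hF]
            have := hT0 m
            rw [h1] at hpos
            linarith
      have h2 : T k ≤ x i := by rw [hxT]; exact hTmono _ _ hki (hrn i)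
      intro h0
      rw [hx] at h2
      simp only [h0] at h2
      norm_num at h2
      linarith
  -- strict lower bound: c * D < K
  obtain ⟨k₀, hk₀mem, hk₀pos, hk₀strict⟩ := hex
  have hlt : c * D < K := by
    have h1 : c * D = ∑ k ∈ Finset.range n, δ k * (c * (∑ i ∈ S k, μ i)) := by
      rw [hDid, Finset.mul_sum]
      exact Finset.sum_congr rfl fun k _ => by ring
    rw [h1, hKid]
    exact Finset.sum_lt_sum hterm
      ⟨k₀, hk₀mem, mul_lt_mul_of_pos_left hk₀strict hk₀pos⟩
  -- upper bound: K ≤ c * D via Cauchy-Schwarz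
  have hKnn : 0 ≤ K := Finset.sum_nonneg fun i _ => Finset.sum_nonneg fun j _ =>
    mul_nonneg (hWnn i j) (le_max_right _ _)
  have h2K : 2 * K = ∑ i, ∑ j, W i j * (|h i - h j| * (h i + h j)) := by
    have hswap : K = ∑ i, ∑ j, W i j * max (x j - x i) 0 := by
      rw [hK, Finset.sum_comm]
      exact Finset.sum_congr rfl fun i _ => Finset.sum_congr rfl fun j _ => by
        rw [hWs i j]
    calc 2 * K = K + K := by ring
    _ = (∑ i, ∑ j, W i j * max (x i - x j) 0) + (∑ i, ∑ j, W i j * max (x j - x i) 0) :=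
        congrArg₂ (· + ·) hK hswap
    _ = ∑ i, ∑ j, (W i j * max (x i - x j) 0 + W i j * max (x j - x i) 0) := by
        rw [← Finset.sum_add_distrib]
        exact Finset.sum_congr rfl fun i _ => (Finset.sum_add_distrib).symm
    _ = ∑ i, ∑ j, W i j * (|h i - h j| * (h i + h j)) := by
        refine Finset.sum_congr rfl fun i _ => Finset.sum_congr rfl fun j _ => ?_
        have habs : max (x i - x j) 0 + max (x j - x i) 0 = |x i - x j| := by
          rcases le_total (x j) (x i) with hle | hle
          · rw [max_eq_left (by linarith), max_eq_right (by linarith),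
              abs_of_nonneg (by linarith)]; ring
          · rw [max_eq_right (by linarith), max_eq_left (by linarith),
              abs_of_nonpos (by linarith)]; ring
        have hfac : |x i - x j| = |h i - h j| * (h i + h j) := by
          rw [hx]
          have h1 : h i ^ 2 - h j ^ 2 = (h i - h j) * (h i + h j) := by ring
          rw [h1, abs_mul, abs_of_nonneg (add_nonneg (hh i) (hh j))]
        rw [← mul_add, habs, hfac]
  set B : ℝ := ∑ i, ∑ j, W i j * (h i + h j)^2 with hB
  have hCS : (2 * K)^2 ≤ A * B := by
    have := Finset.sum_mul_sq_le_sq_mul_sq Finset.univ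
      (fun p : Fin n × Fin n => Real.sqrt (W p.1 p.2) * |h p.1 - h p.2|)
      (fun p : Fin n × Fin n => Real.sqrt (W p.1 p.2) * (h p.1 + h p.2))
    have e1 : ∑ p : Fin n × Fin n,
        (Real.sqrt (W p.1 p.2) * |h p.1 - h p.2|) * (Real.sqrt (W p.1 p.2) * (h p.1 + h p.2))
        = 2 * K := by
      rw [h2K, Fintype.sum_prod_type]
      refine Finset.sum_congr rfl fun i _ => Finset.sum_congr rfl fun j _ => ?_
      have : Real.sqrt (W i j) * Real.sqrt (W i j) = W i j := Real.mul_self_sqrt (hWnn i j)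
      calc (Real.sqrt (W i j) * |h i - h j|) * (Real.sqrt (W i j) * (h i + h j))
          = (Real.sqrt (W i j) * Real.sqrt (W i j)) * (|h i - h j| * (h i + h j)) := by ring
        _ = W i j * (|h i - h j| * (h i + h j)) := by rw [this]
    have e2 : ∑ p : Fin n × Fin n, (Real.sqrt (W p.1 p.2) * |h p.1 - h p.2|)^2 = A := by
      rw [hA, Fintype.sum_prod_type]
      refine Finset.sum_congr rfl fun i _ => Finset.sum_congr rfl fun j _ => ?_
      rw [mul_pow, Real.sq_sqrt (hWnn i j), sq_abs]
    have e3 : ∑ p : Fin n × Fin n, (Real.sqrt (W p.1 p.2) * (h p.1 + h p.2))^2 = B := by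
      rw [hB, Fintype.sum_prod_type]
      refine Finset.sum_congr rfl fun i _ => Finset.sum_congr rfl fun j _ => ?_
      rw [mul_pow, Real.sq_sqrt (hWnn i j)]
    rw [e1, e2, e3] at this
    exact this
  have hB4D : B ≤ 4 * D := by
    have h1 : B ≤ ∑ i, ∑ j, (W i j * (2 * h i ^2) + W i j * (2 * h j ^2)) := by
      refine Finset.sum_le_sum fun i _ => Finset.sum_le_sum fun j _ => ?_
      have : (h i + h j)^2 ≤ 2 * h i ^2 + 2 * h j ^2 := by nlinarith [sq_nonneg (h i - h j)]
      calc W i j * (h i + h j)^2 ≤ W i j * (2 * h i ^2 + 2 * h j ^2) :=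
            mul_le_mul_of_nonneg_left this (hWnn i j)
        _ = W i j * (2 * h i ^2) + W i j * (2 * h j ^2) := by ring
    have h2 : ∑ i, ∑ j, (W i j * (2 * h i ^2) + W i j * (2 * h j ^2))
        = (∑ i, 2 * h i ^2 * (∑ j, W i j)) + (∑ j, 2 * h j ^2 * (∑ i, W i j)) := by
      have e1 : ∑ i, ∑ j, (W i j * (2 * h i ^2) + W i j * (2 * h j ^2))
          = (∑ i : Fin n, ∑ j : Fin n, W i j * (2 * h i ^2))
            + (∑ i : Fin n, ∑ j : Fin n, W i j * (2 * h j ^2)) := by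
        rw [← Finset.sum_add_distrib]
        exact Finset.sum_congr rfl fun i _ => Finset.sum_add_distrib
      rw [e1]
      congr 1
      · refine Finset.sum_congr rfl fun i _ => ?_
        rw [Finset.mul_sum]
        exact Finset.sum_congr rfl fun j _ => by ring
      · rw [Finset.sum_comm]
        refine Finset.sum_congr rfl fun j _ => ?_
        rw [Finset.mul_sum]
        exact Finset.sum_congr rfl fun i _ => by ring
    have h3 : ∀ j, (∑ i, W i j) = ∑ i, W j i := by
      intro j; exact Finset.sum_congr rfl fun i _ => hWs i j
    have h4 : (∑ i, 2 * h i ^2 * (∑ j, W i j)) ≤ ∑ i, 2 * h i ^2 * μ i := by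
      refine Finset.sum_le_sum fun i _ => ?_
      exact mul_le_mul_of_nonneg_left (hdμ i) (by positivity)
    have h5 : (∑ j, 2 * h j ^2 * (∑ i, W i j)) ≤ ∑ j, 2 * h j ^2 * μ j := by
      refine Finset.sum_le_sum fun j _ => ?_
      rw [h3 j]
      exact mul_le_mul_of_nonneg_left (hdμ j) (by positivity)
    have h6 : (∑ i, 2 * h i ^2 * μ i) = 2 * D := by
      rw [hD, Finset.mul_sum]
      exact Finset.sum_congr rfl fun i _ => by ring
    linarith
  have hKD : K ≤ c * D := by
    have hcD : c * D = Real.sqrt (A * D) := by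
      rw [hc]
      rw [show A * D = (A / D) * D^2 by field_simp]
      rw [Real.sqrt_mul (div_nonneg hA0 hD0.le), Real.sqrt_sq hD0.le]
    rw [hcD]
    have hK2 : K^2 ≤ A * D := by nlinarith
    have := Real.sqrt_le_sqrt hK2
    rwa [Real.sqrt_sq hKnn] at this
  linarith


set_option maxHeartbeats 1000000 in

/-- generalized Cheeger inequality, hard direction: `φ_L(G)² / 2 ≤ λ₂`,
where `λ₂` is the second smallest eigenvalue of `L` (characterized via the Rayleigh
quotient over vectors orthogonal to the kernel eigenvector `v₁ i = sqrt(d_i τ_i)`),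
and `φ_L(G)` is the minimal generalized conductance over nonempty proper subsets. -/
theorem generalized_cheeger_hard
    {n : ℕ} (hn : 1 < n) (W : Matrix (Fin n) (Fin n) ℝ) (hWsymm : W.IsSymm)
    (hWnn : ∀ i j, 0 ≤ W i j) (d τ : Fin n → ℝ)
    (hd : ∀ i, d i = ∑ j, W i j) (hdpos : ∀ i, 0 < d i) (hτ : ∀ i, 1 ≤ τ i)
    (L : Matrix (Fin n) (Fin n) ℝ)
    (hL : L = Matrix.diagonal (fun i => (Real.sqrt (d i * τ i))⁻¹) *
        (Matrix.diagonal d - W) *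
        Matrix.diagonal (fun i => (Real.sqrt (d i * τ i))⁻¹))
    (lam2 : ℝ)
    (hlam2 : IsGLB {r : ℝ | ∃ u : Fin n → ℝ, u ≠ 0 ∧
        (u ⬝ᵥ fun i => Real.sqrt (d i * τ i)) = 0 ∧
        r = (u ⬝ᵥ (L *ᵥ u)) / (u ⬝ᵥ u)} lam2)
    (φ : ℝ)
    (hφ : IsGLB {r : ℝ | ∃ S : Finset (Fin n), S.Nonempty ∧ S ≠ Finset.univ ∧
        r = (∑ i ∈ S, ∑ j ∈ Sᶜ, W i j) /
          min (∑ i ∈ S, d i * τ i) (∑ i ∈ Sᶜ, d i * τ i)} φ) :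
    φ ^ 2 / 2 ≤ lam2 := by
  classical
  have hWs' : ∀ i j, W i j = W j i := fun i j => hWsymm.apply j i
  haveI : Nonempty (Fin n) := ⟨⟨0, by omega⟩⟩
  set μ : Fin n → ℝ := fun i => d i * τ i with hμdef
  have hμpos : ∀ i, 0 < μ i := fun i =>
    mul_pos (hdpos i) (lt_of_lt_of_le one_pos (hτ i))
  set v : Fin n → ℝ := fun i => Real.sqrt (d i * τ i) with hvdef
  have hvpos : ∀ i, 0 < v i := fun i => Real.sqrt_pos.2 (hμpos i)
  have hv2 : ∀ i, v i ^ 2 = μ i := fun i => Real.sq_sqrt (hμpos i).le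
  have hdμ : ∀ i, (∑ j, W i j) ≤ μ i := by
    intro i
    rw [← hd i, hμdef]
    exact le_mul_of_one_le_right (hdpos i).le (hτ i)
  -- φ is nonnegative
  have hφ0 : 0 ≤ φ := by
    apply hφ.2
    rintro r ⟨S, hSne, hSuniv, rfl⟩
    have hScne : Sᶜ.Nonempty := by
      rcases Finset.eq_empty_or_nonempty Sᶜ with he | hne
      · exact absurd (by rwa [Finset.compl_eq_empty_iff] at he) hSuniv
      · exact hne
    refine div_nonneg
      (Finset.sum_nonneg fun i _ => Finset.sum_nonneg fun j _ => hWnn i j) ?_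
    have h1 : 0 < ∑ i ∈ S, μ i := Finset.sum_pos (fun i _ => hμpos i) hSne
    have h2 : 0 < ∑ i ∈ Sᶜ, μ i := Finset.sum_pos (fun i _ => hμpos i) hScne
    exact le_min h1.le h2.le
  refine hlam2.2 ?_
  rintro r ⟨u, hu0, huorth, rfl⟩
  set f : Fin n → ℝ := fun i => (v i)⁻¹ * u i with hfdef
  have huf : ∀ i, u i = v i * f i := by
    intro i; rw [hfdef, ← mul_assoc, mul_inv_cancel₀ (hvpos i).ne', one_mul]
  set Af : ℝ := ∑ i, ∑ j, W i j * (f i - f j)^2 with hAf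
  set Df : ℝ := ∑ i, μ i * f i ^ 2 with hDf
  have hAf0 : 0 ≤ Af := Finset.sum_nonneg fun i _ => Finset.sum_nonneg fun j _ =>
    mul_nonneg (hWnn i j) (sq_nonneg _)
  -- numerator of the Rayleigh quotient
  have hQ : u ⬝ᵥ (L *ᵥ u) = Af / 2 := by
    have h1 : u ⬝ᵥ (L *ᵥ u) = ∑ i, f i * (d i * f i - ∑ j, W i j * f j) := by
      rw [hL]
      exact quad_form_calc W d (fun i => (v i)⁻¹) u
    rw [h1]
    have h2 := quad_helper W hWs' f
    have h3 : (∑ i, (∑ j, W i j) * f i ^ 2) = ∑ i, d i * f i ^2 :=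
      Finset.sum_congr rfl fun i _ => by rw [← hd i]
    rw [h3] at h2
    have h4 : ∑ i, f i * (d i * f i - ∑ j, W i j * f j)
        = (∑ i, d i * f i ^2) - ∑ i, ∑ j, W i j * (f i * f j) := by
      rw [← Finset.sum_sub_distrib]
      refine Finset.sum_congr rfl fun i _ => ?_
      rw [mul_sub, Finset.mul_sum]
      congr 1
      · ring
      · exact Finset.sum_congr rfl fun j _ => by ring
    rw [h4, hAf, h2]
    ring
  -- denominator
  have hden : u ⬝ᵥ u = Df := by
    simp only [dotProduct, hDf]
    refine Finset.sum_congr rfl fun i _ => ?_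
    rw [huf i, ← hv2 i]; ring
  have hDf0 : 0 < Df := by
    rw [← hden]
    obtain ⟨i1, hi1⟩ : ∃ i, u i ≠ 0 := by
      by_contra hc; push_neg at hc; exact hu0 (funext hc)
    exact Finset.sum_pos' (fun i _ => mul_self_nonneg (u i))
      ⟨i1, Finset.mem_univ _, mul_self_pos.2 hi1⟩
  -- orthogonality in terms of f
  have horth : ∑ i, μ i * f i = 0 := by
    calc ∑ i, μ i * f i = ∑ i, u i * v i := by
          refine Finset.sum_congr rfl fun i _ => ?_
          rw [huf i, ← hv2 i]; ring
    _ = 0 := huorth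
  -- it suffices to bound φ² by Af/Df
  suffices hkey : φ^2 ≤ Af / Df by
    rw [hQ, hden]
    rw [show Af / 2 / Df = (Af / Df) / 2 by ring]
    linarith
  -- median shift
  obtain ⟨c, hc1, hc2⟩ := exists_median (by omega : 0 < n) f μ (fun i => (hμpos i).le)
  set M : ℝ := ∑ i, μ i with hM
  have hM0 : 0 < M := Finset.sum_pos (fun i _ => hμpos i) Finset.univ_nonempty
  set g : Fin n → ℝ := fun i => f i - c with hg
  set Ag : ℝ := ∑ i, ∑ j, W i j * (g i - g j)^2 with hAg
  set Dg : ℝ := ∑ i, μ i * g i ^ 2 with hDg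
  have hAgAf : Ag = Af := by
    refine Finset.sum_congr rfl fun i _ => Finset.sum_congr rfl fun j _ => ?_
    rw [hg]; ring_nf
  have hDgval : Dg = Df + c^2 * M := by
    rw [hDg, hDf, hM]
    have he : ∀ i : Fin n, μ i * g i ^2
        = μ i * f i ^2 - 2 * c * (μ i * f i) + c^2 * μ i := fun i => by rw [hg]; ring
    rw [Finset.sum_congr rfl fun i _ => he i, Finset.sum_add_distrib,
      Finset.sum_sub_distrib, ← Finset.mul_sum, ← Finset.mul_sum, horth]
    ring
  have hDg0 : 0 < Dg := by
    rw [hDgval]; nlinarith [sq_nonneg c]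
  have hDfDg : Df ≤ Dg := by rw [hDgval]; nlinarith [sq_nonneg c]
  have hAg0 : 0 ≤ Ag := by rw [hAgAf]; exact hAf0
  -- positive and negative parts
  set gp : Fin n → ℝ := fun i => max (g i) 0 with hgp
  set gm : Fin n → ℝ := fun i => max (-(g i)) 0 with hgm
  set App : ℝ := ∑ i, ∑ j, W i j * (gp i - gp j)^2 with hApp
  set Amm : ℝ := ∑ i, ∑ j, W i j * (gm i - gm j)^2 with hAmm
  set Dpp : ℝ := ∑ i, μ i * gp i ^ 2 with hDpp
  set Dmm : ℝ := ∑ i, μ i * gm i ^ 2 with hDmm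
  have hApp0 : 0 ≤ App := Finset.sum_nonneg fun i _ => Finset.sum_nonneg fun j _ =>
    mul_nonneg (hWnn i j) (sq_nonneg _)
  have hAmm0 : 0 ≤ Amm := Finset.sum_nonneg fun i _ => Finset.sum_nonneg fun j _ =>
    mul_nonneg (hWnn i j) (sq_nonneg _)
  have hDpp0 : 0 ≤ Dpp := Finset.sum_nonneg fun i _ =>
    mul_nonneg (hμpos i).le (sq_nonneg _)
  have hDmm0 : 0 ≤ Dmm := Finset.sum_nonneg fun i _ =>
    mul_nonneg (hμpos i).le (sq_nonneg _)
  have hsplitA : App + Amm ≤ Ag := by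
    rw [hApp, hAmm, hAg, ← Finset.sum_add_distrib]
    refine Finset.sum_le_sum fun i _ => ?_
    rw [← Finset.sum_add_distrib]
    refine Finset.sum_le_sum fun j _ => ?_
    rw [hgp, hgm, ← mul_add]
    exact mul_le_mul_of_nonneg_left (split_sq (g i) (g j)) (hWnn i j)
  have hsplitD : Dpp + Dmm = Dg := by
    rw [hDpp, hDmm, hDg, ← Finset.sum_add_distrib]
    refine Finset.sum_congr rfl fun i _ => ?_
    rw [hgp, hgm, ← mul_add, split_sq_sum]
  -- support bounds
  have hsuppP : 2 * (∑ i ∈ Finset.univ.filter (fun i => gp i ≠ 0), μ i) ≤ M := by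
    have hsub : Finset.univ.filter (fun i => gp i ≠ 0)
        ⊆ Finset.univ.filter (fun i => c < f i) := by
      intro i hi
      simp only [Finset.mem_filter] at hi ⊢
      refine ⟨hi.1, ?_⟩
      by_contra hle
      push_neg at hle
      exact hi.2 (by rw [hgp]; exact max_eq_right (by rw [hg]; simp; linarith))
    have := Finset.sum_le_sum_of_subset_of_nonneg hsub (fun i _ _ => (hμpos i).le)
    linarith [hc2]
  have hsuppM : 2 * (∑ i ∈ Finset.univ.filter (fun i => gm i ≠ 0), μ i) ≤ M := by
    have hsub : Finset.univ.filter (fun i => gm i ≠ 0)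
        ⊆ Finset.univ.filter (fun i => f i < c) := by
      intro i hi
      simp only [Finset.mem_filter] at hi ⊢
      refine ⟨hi.1, ?_⟩
      by_contra hle
      push_neg at hle
      exact hi.2 (by rw [hgm]; exact max_eq_right (by rw [hg]; simp; linarith))
    have := Finset.sum_le_sum_of_subset_of_nonneg hsub (fun i _ _ => (hμpos i).le)
    linarith [hc1]
  -- select the good half
  have hnonzero : ∀ w : Fin n → ℝ, 0 < (∑ i, μ i * w i ^ 2) → ∃ i, w i ≠ 0 := by
    intro w hw
    by_contra hcz
    push_neg at hcz
    rw [Finset.sum_eq_zero (fun i _ => by rw [hcz i]; ring)] at hw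
    exact lt_irrefl 0 hw
  obtain ⟨h, hh0, hhsupp, hhratio, hhD0⟩ :
      ∃ h : Fin n → ℝ, (∀ i, 0 ≤ h i) ∧
        (2 * (∑ i ∈ Finset.univ.filter (fun i => h i ≠ 0), μ i) ≤ M) ∧
        ((∑ i, ∑ j, W i j * (h i - h j)^2) * Dg ≤ Ag * (∑ i, μ i * h i ^ 2)) ∧
        (0 < ∑ i, μ i * h i ^ 2) := by
    by_cases hcase : 0 < Dpp ∧ App * Dg ≤ Ag * Dpp
    · exact ⟨gp, fun i => le_max_right _ _, hsuppP, by rw [← hApp, ← hDpp]; exact hcase.2,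
        by rw [← hDpp]; exact hcase.1⟩
    · push_neg at hcase
      have hDmmpos : 0 < Dmm := by
        rcases lt_or_eq_of_le hDpp0 with hp | hp
        · have hlt := hcase hp
          by_contra hc0
          push_neg at hc0
          have : Dmm = 0 := le_antisymm hc0 hDmm0
          nlinarith
        · rw [← hp] at hsplitD; linarith
      refine ⟨gm, fun i => le_max_right _ _, hsuppM, ?_, by rw [← hDmm]; exact hDmmpos⟩
      rw [← hAmm, ← hDmm]
      rcases lt_or_eq_of_le hDpp0 with hp | hp
      · have hlt := hcase hp
        nlinarith [mul_nonneg (by linarith : (0:ℝ) ≤ Ag - App - Amm) hDg0.le]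
      · have hDmg : Dmm = Dg := by rw [← hsplitD, ← hp]; ring
        rw [hDmg]
        nlinarith
  have hhne : ∃ i, h i ≠ 0 := hnonzero h hhD0
  -- sweep cut
  obtain ⟨S, hSne, hSh, hSineq⟩ := cheeger_sweep W hWs' hWnn μ h hμpos hdμ hh0 hhne
  set Ah : ℝ := ∑ i, ∑ j, W i j * (h i - h j)^2 with hAh
  set Dh : ℝ := ∑ i, μ i * h i ^ 2 with hDh
  have hAh0 : 0 ≤ Ah := Finset.sum_nonneg fun i _ => Finset.sum_nonneg fun j _ =>
    mul_nonneg (hWnn i j) (sq_nonneg _)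
  -- measure comparisons
  have hmS0 : 0 < ∑ i ∈ S, μ i := Finset.sum_pos (fun i _ => hμpos i) hSne
  have hmS : (∑ i ∈ S, μ i) ≤ ∑ i ∈ Sᶜ, μ i := by
    have hsub : S ⊆ Finset.univ.filter (fun i => h i ≠ 0) := fun i hi =>
      Finset.mem_filter.2 ⟨Finset.mem_univ _, hSh i hi⟩
    have h1 := Finset.sum_le_sum_of_subset_of_nonneg hsub (fun i _ _ => (hμpos i).le)
    have h2 : (∑ i ∈ S, μ i) + ∑ i ∈ Sᶜ, μ i = M := by
      rw [hM]; exact Finset.sum_add_sum_compl S μ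
    linarith
  have hSuniv : S ≠ Finset.univ := by
    intro heq
    have := hmS
    rw [heq, Finset.compl_univ, Finset.sum_empty] at this
    have h2 : 0 < ∑ i ∈ (Finset.univ : Finset (Fin n)), μ i :=
      Finset.sum_pos (fun i _ => hμpos i) Finset.univ_nonempty
    rw [heq] at hmS0
    linarith
  -- φ is at most the conductance of S
  have hφle : φ ≤ (∑ i ∈ S, ∑ j ∈ Sᶜ, W i j) / (∑ i ∈ S, μ i) := by
    have hmem : ((∑ i ∈ S, ∑ j ∈ Sᶜ, W i j) /
        min (∑ i ∈ S, μ i) (∑ i ∈ Sᶜ, μ i)) ∈ {r : ℝ | ∃ S : Finset (Fin n),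
          S.Nonempty ∧ S ≠ Finset.univ ∧
          r = (∑ i ∈ S, ∑ j ∈ Sᶜ, W i j) / min (∑ i ∈ S, μ i) (∑ i ∈ Sᶜ, μ i)} :=
      ⟨S, hSne, hSuniv, rfl⟩
    have := hφ.1 hmem
    rwa [min_eq_left hmS] at this
  -- conclude
  have hsq : φ^2 ≤ Ah / Dh := by
    have h1 : φ ≤ Real.sqrt (Ah / Dh) := by
      refine le_trans hφle ?_
      rw [div_le_iff₀ hmS0]
      exact hSineq
    calc φ^2 ≤ (Real.sqrt (Ah / Dh))^2 := pow_le_pow_left₀ hφ0 h1 2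
    _ = Ah / Dh := Real.sq_sqrt (div_nonneg hAh0 hhD0.le)
  have h2 : Ah / Dh ≤ Ag / Dg := (div_le_div_iff₀ hhD0 hDg0).2 hhratio
  have h3 : Ag / Dg ≤ Af / Df := by
    rw [hAgAf]
    exact (div_le_div_iff₀ hDg0 hDf0).2 (mul_le_mul_of_nonneg_left hDfDg hAf0)
  linarith
end

section
/- For the continuous-time random walk θ_μ(t) = e^{-L^RW t} μ with L^RW = (D_W - W)(D_W T)^{-1}, and any subset S with vol_L(S) ≤ vol_L(V)/2, the total probability Θ_μ(t,S) = Σ_{i∈S} θ_μ(t)[i] starting from μ = (D_W T)χ_S / vol_L(S) satisfies dΘ_μ(t,S)/dt ≤ 0 for all t ≥ 0. -/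
open Matrix

section aux
variable {n : ℕ}

open NormedSpace in
lemma exp_semiconj (X Y L : Matrix (Fin n) (Fin n) ℝ) (h : X * L = L * Y) :
    NormedSpace.exp X * L = L * NormedSpace.exp Y := by
  letI : SeminormedRing (Matrix (Fin n) (Fin n) ℝ) := Matrix.linftyOpSemiNormedRing
  letI : NormedRing (Matrix (Fin n) (Fin n) ℝ) := Matrix.linftyOpNormedRing
  letI : NormedAlgebra ℝ (Matrix (Fin n) (Fin n) ℝ) := Matrix.linftyOpNormedAlgebra
  have hpow : ∀ k : ℕ, X ^ k * L = L * Y ^ k := by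
    intro k
    induction k with
    | zero => simp
    | succ k ih => rw [pow_succ, mul_assoc, h, ← mul_assoc, ih, mul_assoc, ← pow_succ]
  rw [exp_eq_tsum ℝ]
  beta_reduce
  erw [← (expSeries_summable' (𝕂 := ℝ) X).tsum_mul_right L,
      ← (expSeries_summable' (𝕂 := ℝ) Y).tsum_mul_left L]
  congr 1
  funext k
  rw [smul_mul_assoc, hpow, mul_smul_comm]

lemma lap_psd (W : Matrix (Fin n) (Fin n) ℝ) (hWsymm : W.IsSymm)
    (hWnn : ∀ i j, 0 ≤ W i j) (d : Fin n → ℝ) (hd : ∀ i, d i = ∑ j, W i j)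
    (v : Fin n → ℝ) : 0 ≤ v ⬝ᵥ ((Matrix.diagonal d - W) *ᵥ v) := by
  have hsymm : ∀ i j, W j i = W i j := fun i j => by
    simpa using congrFun (congrFun hWsymm i) j
  have expand : v ⬝ᵥ ((Matrix.diagonal d - W) *ᵥ v)
      = (∑ i, ∑ j, W i j * (v i * v i)) - ∑ i, ∑ j, W i j * (v i * v j) := by
    rw [sub_mulVec, dotProduct_sub]
    congr 1
    · simp only [dotProduct, mulVec_diagonal, hd, Finset.sum_mul, Finset.mul_sum]
      refine Finset.sum_congr rfl fun i _ => Finset.sum_congr rfl fun j _ => ?_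
      ring
    · simp only [dotProduct, mulVec, Finset.mul_sum]
      refine Finset.sum_congr rfl fun i _ => Finset.sum_congr rfl fun j _ => ?_
      ring
  have swap : ∑ i, ∑ j, W i j * (v j * v j) = ∑ i, ∑ j, W i j * (v i * v i) := by
    rw [Finset.sum_comm]
    exact Finset.sum_congr rfl fun i _ => Finset.sum_congr rfl fun j _ => by rw [hsymm i j]
  have key : 2 * (v ⬝ᵥ ((Matrix.diagonal d - W) *ᵥ v))
      = ∑ i, ∑ j, W i j * (v i - v j)^2 := by
    rw [expand]
    have h2 : ∀ i j : Fin n, W i j * (v i - v j)^2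
        = W i j * (v i * v i) + W i j * (v j * v j) - 2 * (W i j * (v i * v j)) := by
      intro i j; ring
    simp only [h2, Finset.sum_sub_distrib, Finset.sum_add_distrib]
    rw [swap]
    simp only [← Finset.mul_sum]
    ring
  nlinarith [Finset.sum_nonneg (fun i (_ : i ∈ Finset.univ) =>
    Finset.sum_nonneg (fun j (_ : j ∈ Finset.univ) =>
      mul_nonneg (hWnn i j) (sq_nonneg (v i - v j))))]

end aux


/-- for the continuous-time random walk started from the degree-weighted
distribution `μ = (D_W T) χ_S / vol_L(S)` on a set `S` with `vol_L(S) ≤ vol_L(V)/2`,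
the total probability mass `Θ_μ(t,S)` in `S` is nonincreasing: `dΘ/dt ≤ 0`. -/
theorem probability_mass_nonincreasing
    {n : ℕ} (W : Matrix (Fin n) (Fin n) ℝ) (hWsymm : W.IsSymm)
    (hWnn : ∀ i j, 0 ≤ W i j) (d τ : Fin n → ℝ)
    (hd : ∀ i, d i = ∑ j, W i j) (hdpos : ∀ i, 0 < d i) (hτ : ∀ i, 0 < τ i)
    (S : Finset (Fin n)) (hS : S.Nonempty)
    (hvol : ∑ i ∈ S, d i * τ i ≤ (∑ i, d i * τ i) / 2) :
    let LRW : Matrix (Fin n) (Fin n) ℝ :=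
      (Matrix.diagonal d - W) * Matrix.diagonal (fun i => (d i * τ i)⁻¹)
    let μ : Fin n → ℝ :=
      fun i => if i ∈ S then d i * τ i / (∑ j ∈ S, d j * τ j) else 0
    let Θ : ℝ → ℝ := fun t => ∑ i ∈ S, (NormedSpace.exp ((-t) • LRW) *ᵥ μ) i
    ∀ t : ℝ, 0 ≤ t → deriv Θ t ≤ 0 := by
  intro LRW μ Θ t ht
  classical
  letI : SeminormedRing (Matrix (Fin n) (Fin n) ℝ) := Matrix.linftyOpSemiNormedRing
  letI : NormedRing (Matrix (Fin n) (Fin n) ℝ) := Matrix.linftyOpNormedRing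
  letI : NormedAlgebra ℝ (Matrix (Fin n) (Fin n) ℝ) := Matrix.linftyOpNormedAlgebra
  set Lm : Matrix (Fin n) (Fin n) ℝ := Matrix.diagonal d - W with hLm
  set M : Matrix (Fin n) (Fin n) ℝ := Matrix.diagonal (fun i => (d i * τ i)⁻¹) with hM
  set Minv : Matrix (Fin n) (Fin n) ℝ := Matrix.diagonal (fun i => d i * τ i) with hMinv
  have hALM : LRW = Lm * M := rfl
  set A : Matrix (Fin n) (Fin n) ℝ := LRW with hA
  set E : Matrix (Fin n) (Fin n) ℝ := NormedSpace.exp ((-t) • A) with hE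
  set K : Matrix (Fin n) (Fin n) ℝ := NormedSpace.exp ((-(t/2)) • A) with hK
  have hvolpos : 0 < ∑ j ∈ S, d j * τ j :=
    Finset.sum_pos (fun j _ => mul_pos (hdpos j) (hτ j)) hS
  -- E = K * K
  have hE2 : E = K * K := by
    rw [hE, hK, ← Matrix.exp_add_of_commute _ _ (Commute.refl _), ← add_smul]
    congr 1
    module
  -- A commutes with K
  have hcommAK : A * K = K * A :=
    (exp_semiconj _ _ A (by rw [smul_mul_assoc, mul_smul_comm])).symm
  -- transpose facts
  have hLmT : Lmᵀ = Lm := by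
    rw [hLm, transpose_sub, diagonal_transpose, hWsymm]
  have hAT : Aᵀ = M * Lm := by
    rw [hALM, transpose_mul, hLmT, hM, diagonal_transpose]
  -- K * Lm = Lm * Kᵀ
  have hKT : NormedSpace.exp ((-(t/2)) • Aᵀ) = Kᵀ := by
    rw [← transpose_smul, Matrix.exp_transpose]
  have hKL : K * Lm = Lm * Kᵀ := by
    rw [← hKT]
    refine exp_semiconj _ _ Lm ?_
    rw [smul_mul_assoc, mul_smul_comm, hAT, hALM, mul_assoc]
  -- A * Minv = Lm
  have hMMinv : M * Minv = 1 := by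
    have h0 : (fun i => (d i * τ i)⁻¹ * (d i * τ i)) = fun _ => (1 : ℝ) :=
      funext fun i => inv_mul_cancel₀ (mul_pos (hdpos i) (hτ i)).ne'
    rw [hM, hMinv, diagonal_mul_diagonal, h0, diagonal_one]
  have hAMinv : A * Minv = Lm := by
    rw [hALM, mul_assoc, hMMinv, mul_one]
  -- key identity
  have hident : A * E * Minv = K * Lm * Kᵀ := by
    rw [hE2, ← mul_assoc A K K, hcommAK, mul_assoc K A K, hcommAK, ← mul_assoc K K A,
      mul_assoc (K * K) A Minv, hAMinv, mul_assoc K K Lm]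
    conv_lhs => rw [hKL]
    rw [← mul_assoc K Lm Kᵀ]
  -- indicator vector
  set χ : Fin n → ℝ := fun i => if i ∈ S then (1 : ℝ) else 0 with hχ
  have hμ : μ = (∑ j ∈ S, d j * τ j)⁻¹ • (Minv *ᵥ χ) := by
    funext i
    simp only [hMinv, hχ, Pi.smul_apply, mulVec_diagonal, smul_eq_mul]
    by_cases hi : i ∈ S <;> simp [hi, μ, div_eq_inv_mul, mul_comm]
  have hsum : ∀ v : Fin n → ℝ, ∑ i ∈ S, v i = χ ⬝ᵥ v := by
    intro v
    rw [dotProduct]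
    simp only [hχ, ite_mul, one_mul, zero_mul]
    rw [Finset.sum_ite_mem, Finset.univ_inter]
  -- nonnegativity of the key quantity
  have hkey : 0 ≤ ∑ i ∈ S, ((A * E) *ᵥ μ) i := by
    rw [hsum, hμ, mulVec_smul, dotProduct_smul, mulVec_mulVec, hident, smul_eq_mul]
    refine mul_nonneg (inv_nonneg.2 hvolpos.le) ?_
    rw [mul_assoc K Lm Kᵀ, ← mulVec_mulVec, dotProduct_mulVec, ← mulVec_transpose,
      ← mulVec_mulVec]
    exact lap_psd W hWsymm hWnn d hd (Kᵀ *ᵥ χ)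
  -- the derivative
  let L0 : Matrix (Fin n) (Fin n) ℝ →ₗ[ℝ] ℝ :=
    { toFun := fun B => ∑ i ∈ S, (B *ᵥ μ) i
      map_add' := fun B C => by simp [add_mulVec, Finset.sum_add_distrib]
      map_smul' := fun c B => by simp [smul_mulVec, Finset.mul_sum] }
  have h1 := hasDerivAt_exp_smul_const' (𝕂 := ℝ) A (-t)
  have hneg : HasDerivAt (fun s : ℝ => -s) (-1 : ℝ) t := (hasDerivAt_id t).neg
  have h2 : HasDerivAt (fun s : ℝ => NormedSpace.exp ((-s) • A)) (-(A * E)) t := by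
    have h3 := HasDerivAt.scomp t h1 hneg
    have h6 : (-1 : ℝ) • (A * NormedSpace.exp ((-t) • A)) = -(A * E) := by
      rw [← hE, neg_one_smul]
    rw [← h6]
    exact h3
  have h4 := L0.toContinuousLinearMap.hasFDerivAt.comp_hasDerivAt t h2
  have h5 : (L0.toContinuousLinearMap : Matrix (Fin n) (Fin n) ℝ → ℝ) (-(A * E))
      = -(∑ i ∈ S, ((A * E) *ᵥ μ) i) := by
    simp [L0, neg_mulVec, LinearMap.coe_toContinuousLinearMap']
  have hΘ : HasDerivAt Θ (-(∑ i ∈ S, ((A * E) *ᵥ μ) i)) t := by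
    rw [← h5]
    have hfun : Θ = (⇑(LinearMap.toContinuousLinearMap L0) ∘
        fun s : ℝ => NormedSpace.exp ((-s) • A)) := by
      funext s
      simp only [Function.comp_apply, LinearMap.coe_toContinuousLinearMap', L0,
        LinearMap.coe_mk, AddHom.coe_mk]
      rfl
    rw [hfun]
    exact h4
  rw [hΘ.deriv]
  exact neg_nonpos.2 hkey
end

section
/- With the setup of the previous lemma (initial distribution μ = (D_W T)χ_S / vol_L(S), subset S with vol_L(S) ≤ vol_L(V)/2), the escape rate is bounded by the generalized conductance: |dΘ_μ(t,S)/dt| ≤ h_L(S) for all t ≥ 0, where h_L(S) = cut_W(S,S̄)/vol_L(S). -/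
open Matrix NormedSpace

private lemma symm_dot' {n : ℕ} {M : Matrix (Fin n) (Fin n) ℝ} (h : Mᵀ = M) (x y : Fin n → ℝ) :
    x ⬝ᵥ (M *ᵥ y) = (M *ᵥ x) ⬝ᵥ y := by
  rw [Matrix.dotProduct_mulVec, ← Matrix.vecMul_transpose, h]

private lemma hasDerivAt_dot_exp {n : ℕ} (A : Matrix (Fin n) (Fin n) ℝ)
    (v w : Fin n → ℝ) (t : ℝ) :
    HasDerivAt (fun u : ℝ => v ⬝ᵥ (exp (u • A) *ᵥ w))
      (v ⬝ᵥ ((exp (t • A) * A) *ᵥ w)) t := by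
  letI : SeminormedRing (Matrix (Fin n) (Fin n) ℝ) := Matrix.linftyOpSemiNormedRing
  letI : NormedRing (Matrix (Fin n) (Fin n) ℝ) := Matrix.linftyOpNormedRing
  letI : NormedAlgebra ℝ (Matrix (Fin n) (Fin n) ℝ) := Matrix.linftyOpNormedAlgebra
  have h := hasDerivAt_exp_smul_const (𝕂 := ℝ) A t
  let g : Matrix (Fin n) (Fin n) ℝ →ₗ[ℝ] ℝ :=
    { toFun := fun M => v ⬝ᵥ (M *ᵥ w)
      map_add' := fun M N => by simp [Matrix.add_mulVec, dotProduct_add]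
      map_smul' := fun c M => by
        simp [Matrix.smul_mulVec, dotProduct_smul, smul_eq_mul] }
  exact (g.toContinuousLinearMap.hasFDerivAt (x := exp (t • A))).comp_hasDerivAt t h

private lemma exp_commute_self {n : ℕ} (A : Matrix (Fin n) (Fin n) ℝ) (B : Matrix (Fin n) (Fin n) ℝ)
    (h : Commute A B) : Commute A (exp B) := by
  letI : SeminormedRing (Matrix (Fin n) (Fin n) ℝ) := Matrix.linftyOpSemiNormedRing
  letI : NormedRing (Matrix (Fin n) (Fin n) ℝ) := Matrix.linftyOpNormedRing
  letI : NormedAlgebra ℝ (Matrix (Fin n) (Fin n) ℝ) := Matrix.linftyOpNormedAlgebra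
  exact h.exp_right

/-- The (weighted) graph Laplacian is positive semidefinite. -/
private lemma laplacian_psd {n : ℕ} (W : Matrix (Fin n) (Fin n) ℝ) (hWsymm : W.IsSymm)
    (hWnn : ∀ i j, 0 ≤ W i j) (d : Fin n → ℝ) (hd : ∀ i, d i = ∑ j, W i j)
    (x : Fin n → ℝ) : 0 ≤ x ⬝ᵥ ((Matrix.diagonal d - W) *ᵥ x) := by
  have swap : ∑ i, ∑ j, W i j * (x j * x j) = ∑ i, ∑ j, W i j * (x i * x i) := by
    rw [Finset.sum_comm]
    exact Finset.sum_congr rfl fun i _ => Finset.sum_congr rfl fun j _ => by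
      rw [hWsymm.apply i j]
  have hRHS : ∑ i, ∑ j, W i j * (x i - x j) ^ 2
      = 2 * (∑ i, ∑ j, W i j * (x i * x i)) - 2 * (∑ i, ∑ j, W i j * (x i * x j)) := by
    calc ∑ i, ∑ j, W i j * (x i - x j) ^ 2
        = ∑ i, ∑ j, (W i j * (x i * x i) - 2 * (W i j * (x i * x j)) + W i j * (x j * x j)) :=
          Finset.sum_congr rfl fun i _ => Finset.sum_congr rfl fun j _ => by ring
      _ = (∑ i, ∑ j, W i j * (x i * x i)) - (∑ i, ∑ j, 2 * (W i j * (x i * x j)))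
            + ∑ i, ∑ j, W i j * (x j * x j) := by
          simp only [Finset.sum_sub_distrib, Finset.sum_add_distrib]
      _ = _ := by
          simp only [← Finset.mul_sum, swap]; ring
  have lhs : x ⬝ᵥ ((Matrix.diagonal d - W) *ᵥ x)
      = (∑ i, ∑ j, W i j * (x i * x i)) - ∑ i, ∑ j, W i j * (x i * x j) := by
    have e1 : x ⬝ᵥ (Matrix.diagonal d *ᵥ x) = ∑ i, ∑ j, W i j * (x i * x i) := by
      simp only [dotProduct, Matrix.mulVec_diagonal]
      refine Finset.sum_congr rfl fun i _ => ?_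
      rw [hd i, Finset.sum_mul, Finset.mul_sum]
      exact Finset.sum_congr rfl fun j _ => by ring
    have e2 : x ⬝ᵥ (W *ᵥ x) = ∑ i, ∑ j, W i j * (x i * x j) := by
      simp only [dotProduct, Matrix.mulVec]
      refine Finset.sum_congr rfl fun i _ => ?_
      rw [Finset.mul_sum]
      exact Finset.sum_congr rfl fun j _ => by ring
    rw [Matrix.sub_mulVec, dotProduct_sub, e1, e2]
  have hnn : 0 ≤ ∑ i, ∑ j, W i j * (x i - x j) ^ 2 :=
    Finset.sum_nonneg fun i _ => Finset.sum_nonneg fun j _ =>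
      mul_nonneg (hWnn i j) (sq_nonneg _)
  linarith [hRHS, lhs, hnn]

/-- the escape rate of the random walk from `S` is bounded by the
generalized conductance: `|dΘ_μ(t,S)/dt| ≤ h_L(S) = cut_W(S,S̄)/vol_L(S)`. -/
theorem escape_rate_bounded_by_conductance
    {n : ℕ} (W : Matrix (Fin n) (Fin n) ℝ) (hWsymm : W.IsSymm)
    (hWnn : ∀ i j, 0 ≤ W i j) (d τ : Fin n → ℝ)
    (hd : ∀ i, d i = ∑ j, W i j) (hdpos : ∀ i, 0 < d i) (hτ : ∀ i, 0 < τ i)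
    (S : Finset (Fin n)) (hS : S.Nonempty)
    (hvol : ∑ i ∈ S, d i * τ i ≤ (∑ i, d i * τ i) / 2) :
    let LRW : Matrix (Fin n) (Fin n) ℝ :=
      (Matrix.diagonal d - W) * Matrix.diagonal (fun i => (d i * τ i)⁻¹)
    let μ : Fin n → ℝ :=
      fun i => if i ∈ S then d i * τ i / (∑ j ∈ S, d j * τ j) else 0
    let Θ : ℝ → ℝ := fun t => ∑ i ∈ S, (NormedSpace.exp ((-t) • LRW) *ᵥ μ) i
    ∀ t : ℝ, 0 ≤ t →
      |deriv Θ t| ≤ (∑ i ∈ S, ∑ j ∈ Sᶜ, W i j) / (∑ i ∈ S, d i * τ i) := by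
  intro LRW μ Θ t ht
  classical
  set vol : ℝ := ∑ i ∈ S, d i * τ i with hvoldef
  have hdτpos : ∀ i, 0 < d i * τ i := fun i => mul_pos (hdpos i) (hτ i)
  have hvolpos : 0 < vol := Finset.sum_pos (fun i _ => hdτpos i) hS
  -- square roots
  set s : Fin n → ℝ := fun i => Real.sqrt (d i * τ i) with hsdef
  have hspos : ∀ i, 0 < s i := fun i => Real.sqrt_pos.mpr (hdτpos i)
  have hs2 : ∀ i, s i * s i = d i * τ i := fun i => Real.mul_self_sqrt (hdτpos i).le
  set P : Matrix (Fin n) (Fin n) ℝ := Matrix.diagonal s with hPdef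
  set Q : Matrix (Fin n) (Fin n) ℝ := Matrix.diagonal (fun i => (s i)⁻¹) with hQdef
  have hPQ : P * Q = 1 := by
    rw [hPdef, hQdef, Matrix.diagonal_mul_diagonal,
      show (fun i => s i * (s i)⁻¹) = fun _ : Fin n => (1 : ℝ) from
        funext fun i => mul_inv_cancel₀ (hspos i).ne', Matrix.diagonal_one]
  have hQP : Q * P = 1 := by
    rw [hPdef, hQdef, Matrix.diagonal_mul_diagonal,
      show (fun i => (s i)⁻¹ * s i) = fun _ : Fin n => (1 : ℝ) from
        funext fun i => inv_mul_cancel₀ (hspos i).ne', Matrix.diagonal_one]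
  have hPunit : IsUnit P := ⟨⟨P, Q, hPQ, hQP⟩, rfl⟩
  have hPinv : P⁻¹ = Q := Matrix.inv_eq_right_inv hPQ
  set L0 : Matrix (Fin n) (Fin n) ℝ := Matrix.diagonal d - W with hL0def
  set A : Matrix (Fin n) (Fin n) ℝ := Q * L0 * Q with hAdef
  -- LRW is conjugate to A
  have hQQ : Q * Q = Matrix.diagonal (fun i => (d i * τ i)⁻¹) := by
    rw [hQdef, Matrix.diagonal_mul_diagonal,
      show (fun i => (s i)⁻¹ * (s i)⁻¹) = fun i => (d i * τ i)⁻¹ from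
        funext fun i => by rw [← hs2 i, mul_inv]]
  have hLRW : LRW = P * A * Q := by
    rw [show LRW = L0 * Matrix.diagonal (fun i => (d i * τ i)⁻¹) from rfl, hAdef, ← hQQ,
      show P * (Q * L0 * Q) * Q = (P * Q) * (L0 * (Q * Q)) by noncomm_ring, hPQ, one_mul]
  -- symmetry facts
  have hL0symm : L0ᵀ = L0 := by
    rw [hL0def, Matrix.transpose_sub, Matrix.diagonal_transpose, hWsymm]
  have hQsymm : Qᵀ = Q := by rw [hQdef, Matrix.diagonal_transpose]
  have hPsymm : Pᵀ = P := by rw [hPdef, Matrix.diagonal_transpose]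
  have hAsymm : Aᵀ = A := by
    rw [hAdef, Matrix.transpose_mul, Matrix.transpose_mul, hQsymm, hL0symm, Matrix.mul_assoc]
  have hApsd : ∀ x, 0 ≤ x ⬝ᵥ (A *ᵥ x) := by
    intro x
    have h1 : A *ᵥ x = Q *ᵥ (L0 *ᵥ (Q *ᵥ x)) := by
      rw [Matrix.mulVec_mulVec, Matrix.mulVec_mulVec, hAdef]
    rw [h1, symm_dot' hQsymm x, hL0def]
    exact laplacian_psd W hWsymm hWnn d hd _
  -- the indicator vector and v
  set χ : Fin n → ℝ := fun i => if i ∈ S then 1 else 0 with hχdef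
  set v : Fin n → ℝ := P *ᵥ χ with hvdef
  have hQv : Q *ᵥ v = χ := by
    rw [hvdef, Matrix.mulVec_mulVec, hQP, Matrix.one_mulVec]
  -- exp conjugation
  have hexp : ∀ r : ℝ, exp ((-r) • LRW) = P * exp (r • (-A)) * Q := by
    intro r
    have h1 : P * (r • (-A)) * Q = (-r) • LRW := by
      rw [hLRW, smul_neg, ← neg_smul, Matrix.mul_smul, Matrix.smul_mul]
    have h2 := Matrix.exp_conj P (r • (-A)) hPunit
    rw [hPinv, h1] at h2
    exact h2
  -- Θ as a quadratic form
  have hsum : ∀ x : Fin n → ℝ, χ ⬝ᵥ x = ∑ i ∈ S, x i := by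
    intro x
    simp only [dotProduct, hχdef, ite_mul, one_mul, zero_mul]
    rw [Finset.sum_ite_mem, Finset.univ_inter]
  have hμvec : μ = vol⁻¹ • (Matrix.diagonal (fun i => d i * τ i) *ᵥ χ) := by
    funext i
    show (if i ∈ S then d i * τ i / (∑ j ∈ S, d j * τ j) else 0) = _
    rw [← hvoldef]
    by_cases hi : i ∈ S <;>
      simp [hχdef, hi, Matrix.mulVec_diagonal, div_eq_inv_mul, mul_comm]
  have hQD : Q *ᵥ (Matrix.diagonal (fun i => d i * τ i) *ᵥ χ) = v := by
    rw [Matrix.mulVec_mulVec, hvdef, hQdef, hPdef, Matrix.diagonal_mul_diagonal,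
      show (fun i => (s i)⁻¹ * (d i * τ i)) = s from funext fun i => by
        rw [← hs2 i]; field_simp]
  have hΘeq : Θ = fun u : ℝ => vol⁻¹ * (v ⬝ᵥ (exp (u • (-A)) *ᵥ v)) := by
    funext r
    show ∑ i ∈ S, (exp ((-r) • LRW) *ᵥ μ) i = _
    rw [← hsum, hexp r, hμvec, Matrix.mulVec_smul, dotProduct_smul, smul_eq_mul]
    congr 1
    rw [Matrix.mul_assoc, ← Matrix.mulVec_mulVec, symm_dot' hPsymm χ, ← hvdef,
      ← Matrix.mulVec_mulVec, hQD]
  -- derivative of Θ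
  set ψ : ℝ → ℝ := fun u => v ⬝ᵥ ((exp (u • (-A)) * A) *ᵥ v) with hψdef
  have hΘderiv : HasDerivAt Θ (-(vol⁻¹ * ψ t)) t := by
    rw [hΘeq]
    have h := (hasDerivAt_dot_exp (-A) v v t).const_mul (vol⁻¹)
    convert h using 1
    · rfl
    · rfl
    simp only [hψdef]
    rw [Matrix.mul_neg, Matrix.neg_mulVec, dotProduct_neg, mul_neg]
  -- commutation and symmetry of exponentials
  have hFfact : ∀ u : ℝ, exp (u • (-A)) = exp ((u/2) • (-A)) * exp ((u/2) • (-A)) := by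
    intro u
    rw [← Matrix.exp_add_of_commute _ _ (Commute.refl _), ← add_smul]
    norm_num
  have hFsymm : ∀ u : ℝ, (exp (u • (-A)))ᵀ = exp (u • (-A)) := by
    intro u
    have hsym : (u • (-A)).IsSymm := by
      rw [Matrix.IsSymm, Matrix.transpose_smul, Matrix.transpose_neg, hAsymm]
    exact Matrix.IsSymm.exp hsym
  have hFA : ∀ u : ℝ, exp (u • (-A)) * A = A * exp (u • (-A)) :=
    fun u => (exp_commute_self A _ (((Commute.refl A).neg_right).smul_right u)).symm
  have hψ_nonneg : ∀ u : ℝ, 0 ≤ ψ u := by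
    intro u
    have h1 : exp (u • (-A)) * A
        = exp ((u/2) • (-A)) * (A * exp ((u/2) • (-A))) := by
      rw [hFfact u, Matrix.mul_assoc, ← hFA (u/2)]
    simp only [hψdef]
    rw [h1, ← Matrix.mulVec_mulVec, symm_dot' (hFsymm (u/2)) v, ← Matrix.mulVec_mulVec]
    exact hApsd _
  have hψderiv : ∀ u : ℝ, HasDerivAt ψ (-(v ⬝ᵥ ((exp (u • (-A)) * A * A) *ᵥ v))) u := by
    intro u
    have heq : ψ = fun r : ℝ => v ⬝ᵥ (exp (r • (-A)) *ᵥ (A *ᵥ v)) := by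
      funext r
      simp only [hψdef]
      rw [← Matrix.mulVec_mulVec]
    rw [heq]
    have h := hasDerivAt_dot_exp (-A) v (A *ᵥ v) u
    convert h using 1
    simp only [Matrix.mul_neg, Matrix.neg_mul, Matrix.neg_mulVec, dotProduct_neg,
      Matrix.mulVec_mulVec, Matrix.mul_assoc]
  have hψ'_nonpos : ∀ u : ℝ, 0 ≤ v ⬝ᵥ ((exp (u • (-A)) * A * A) *ᵥ v) := by
    intro u
    have hGsymm : (exp ((u/2) • (-A)) * A)ᵀ = exp ((u/2) • (-A)) * A := by
      rw [Matrix.transpose_mul, hAsymm, hFsymm (u/2), hFA (u/2)]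
    have h1 : exp (u • (-A)) * A * A
        = (exp ((u/2) • (-A)) * A) * (exp ((u/2) • (-A)) * A) := by
      calc exp (u • (-A)) * A * A
          = exp ((u/2) • (-A)) * (exp ((u/2) • (-A)) * A) * A := by
            rw [hFfact u]; noncomm_ring
        _ = exp ((u/2) • (-A)) * (A * exp ((u/2) • (-A))) * A := by
            rw [hFA (u/2)]
        _ = (exp ((u/2) • (-A)) * A) * (exp ((u/2) • (-A)) * A) := by
            noncomm_ring
    rw [h1, ← Matrix.mulVec_mulVec, symm_dot' hGsymm v]
    exact Finset.sum_nonneg fun i _ => mul_self_nonneg _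
  have hψ_antitone : Antitone ψ := by
    apply antitone_of_deriv_nonpos
    · exact fun u => (hψderiv u).differentiableAt
    · intro u
      rw [(hψderiv u).deriv]
      exact neg_nonpos.mpr (hψ'_nonpos u)
  -- value at 0
  have hψ0 : ψ 0 = ∑ i ∈ S, ∑ j ∈ Sᶜ, W i j := by
    simp only [hψdef]
    rw [zero_smul, exp_zero, one_mul]
    have hA : A *ᵥ v = Q *ᵥ (L0 *ᵥ χ) := by
      rw [hAdef, ← Matrix.mulVec_mulVec, ← Matrix.mulVec_mulVec, hQv]
    rw [hA, symm_dot' hQsymm v, hQv, hsum]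
    refine Finset.sum_congr rfl fun i hi => ?_
    rw [hL0def, Matrix.sub_mulVec, Pi.sub_apply, Matrix.mulVec_diagonal]
    have h1 : (W *ᵥ χ) i = ∑ j ∈ S, W i j := by
      show W i ⬝ᵥ χ = _
      simp only [dotProduct, hχdef, mul_ite, mul_one, mul_zero]
      rw [Finset.sum_ite_mem, Finset.univ_inter]
    rw [h1, hχdef]
    simp only [hi, if_true, mul_one]
    rw [hd i, ← Finset.sum_add_sum_compl S fun j => W i j]
    ring
  -- assemble
  rw [hΘderiv.deriv, abs_neg,
    abs_of_nonneg (mul_nonneg (inv_nonneg.mpr hvolpos.le) (hψ_nonneg t)),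
    div_eq_inv_mul, ← hψ0]
  exact mul_le_mul_of_nonneg_left (hψ_antitone ht) (inv_nonneg.mpr hvolpos.le)
end
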